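/- Let B be a Borel probability measure on [0,1], and suppose there are p ∈ (0,1), ε ∈ (0,1) and b > 0 with [p−ε, p+ε] ⊂ (0,1) and B ≥ b·1_{[p−ε,p+ε]}·Leb (Leb denoting Lebesgue measure). Let ū be a Borel probability measure on ℝ≥0 with finite second moment, let x̄ > 0, and set α = εx̄/16. Then, as measures on ℝ≥0, T_B[ū, ū] ≥ (εb²/(2x̄+1)) · (ū([x̄−α, x̄+α]))² · 1_{[x̄−α, x̄+α]}·Leb. -/

import Mathlib

set_option maxHeartbeats 1000000

open MeasureTheory Filter Topology

/-- The transfer operator `T_B[u,v]`: the pushforward of `B ⊗ B ⊗ u ⊗ v` under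
`(z₁, z₂, x₁, x₂) ↦ x₁ (1 - z₁) + x₂ z₂`. -/
noncomputable def transferT (B u v : Measure ℝ) : Measure ℝ :=
  Measure.map (fun q : (ℝ × ℝ) × ℝ × ℝ => q.2.1 * (1 - q.1.1) + q.2.2 * q.1.2)
    ((B.prod B).prod (u.prod v))

open Set

private lemma arith_main17 {p ε xb x₁ x₂ y : ℝ} (hp0 : 0 ≤ p) (hp1 : p ≤ 1)
    (hε0 : 0 < ε) (hε1 : ε < 1) (hxb : 0 < xb)
    (h1l : xb - ε*xb/16 ≤ x₁) (h1u : x₁ ≤ xb + ε*xb/16)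
    (h2l : xb - ε*xb/16 ≤ x₂) (h2u : x₂ ≤ xb + ε*xb/16)
    (hyl : xb - ε*xb/16 ≤ y) (hyu : y ≤ xb + ε*xb/16) :
    ε*x₂/(2*xb+1) ≤ min (1 - (y - x₂*(p+ε))/x₁) (p+ε)
      - max (1 - (y - x₂*(p-ε))/x₁) (p-ε) := by
  have hεxb : (0:ℝ) ≤ ε * xb := mul_nonneg hε0.le hxb.le
  have hεxb1 : ε * xb ≤ xb := mul_le_of_le_one_left hxb.le hε1.le
  have hx₁ : 0 < x₁ := by linarith
  have hx₂ : 0 < x₂ := by linarith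
  have hD : (0:ℝ) < 2*xb+1 := by linarith
  set t := ε*x₂/(2*xb+1) with ht_def
  have hbig : x₁ * x₂ ≤ 2*xb*xb := by nlinarith
  have htx : t*x₁ ≤ ε*xb := by
    rw [ht_def, div_mul_eq_mul_div, div_le_iff₀ hD]
    nlinarith [mul_le_mul_of_nonneg_left hbig hε0.le]
  have hx2b : x₂ ≤ 2*(2*xb+1) := by nlinarith
  have ht2 : t ≤ 2*ε := by
    rw [ht_def, div_le_iff₀ hD]
    nlinarith [mul_le_mul_of_nonneg_left hx2b hε0.le]
  have hq1 : (y - x₂*(p-ε))/x₁ * x₁ = y - x₂*(p-ε) := div_mul_cancel₀ _ hx₁.ne'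
  have hq2 : (y - x₂*(p+ε))/x₁ * x₁ = y - x₂*(p+ε) := div_mul_cancel₀ _ hx₁.ne'
  have hm1 : (0:ℝ) ≤ (1-p) * (xb + ε*xb/16 - x₁) := mul_nonneg (by linarith) (by linarith)
  have hm2 : (0:ℝ) ≤ p * (xb + ε*xb/16 - x₂) := mul_nonneg hp0 (by linarith)
  have hm3 : (0:ℝ) ≤ (1-p) * (x₁ - (xb - ε*xb/16)) := mul_nonneg (by linarith) (by linarith)
  have hm4 : (0:ℝ) ≤ p * (x₂ - (xb - ε*xb/16)) := mul_nonneg hp0 (by linarith)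
  have hm5 : (0:ℝ) ≤ ε * (x₁ - (xb - ε*xb/16)) := mul_nonneg hε0.le (by linarith)
  have hm6 : (0:ℝ) ≤ ε * (x₂ - (xb - ε*xb/16)) := mul_nonneg hε0.le (by linarith)
  have hee : ε * (ε*xb) ≤ ε*xb := mul_le_of_le_one_left hεxb hε1.le
  have A1 : t + (p-ε) ≤ p+ε := by linarith
  have A2 : t + (1 - (y - x₂*(p-ε))/x₁) ≤ p+ε := by
    rw [← mul_le_mul_iff_of_pos_right hx₁]
    have expand : (t + (1 - (y - x₂*(p-ε))/x₁))*x₁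
        = t*x₁ + x₁ - (y - x₂*(p-ε))/x₁*x₁ := by ring
    rw [expand, hq1]
    linarith [htx, hm1, hm2, hm5, hm6, hee, hyl]
  have A3 : t + (p-ε) ≤ 1 - (y - x₂*(p+ε))/x₁ := by
    rw [← mul_le_mul_iff_of_pos_right hx₁]
    have expand : (1 - (y - x₂*(p+ε))/x₁)*x₁
        = x₁ - (y - x₂*(p+ε))/x₁*x₁ := by ring
    rw [expand, hq2]
    linarith [htx, hm3, hm4, hm5, hm6, hee, hyu]
  have A4 : t + (1 - (y - x₂*(p-ε))/x₁) ≤ 1 - (y - x₂*(p+ε))/x₁ := by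
    rw [← mul_le_mul_iff_of_pos_right hx₁]
    have expand1 : (t + (1 - (y - x₂*(p-ε))/x₁))*x₁
        = t*x₁ + x₁ - (y - x₂*(p-ε))/x₁*x₁ := by ring
    have expand2 : (1 - (y - x₂*(p+ε))/x₁)*x₁
        = x₁ - (y - x₂*(p+ε))/x₁*x₁ := by ring
    rw [expand1, expand2, hq1, hq2]
    linarith [htx, hm6, hee]
  rw [le_sub_iff_add_le]
  rcases max_cases (1 - (y - x₂*(p-ε))/x₁) (p-ε) with ⟨h, -⟩ | ⟨h, -⟩ <;> rw [h]
  · exact le_min A4 A2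
  · exact le_min A3 A1

private lemma key_measure17 {p ε xb : ℝ} (hp0 : 0 ≤ p) (hp1 : p ≤ 1)
    (hε0 : 0 < ε) (hε1 : ε < 1) (hxb : 0 < xb)
    {x₁ x₂ : ℝ}
    (hx₁ : x₁ ∈ Icc (xb - ε*xb/16) (xb + ε*xb/16))
    (hx₂ : x₂ ∈ Icc (xb - ε*xb/16) (xb + ε*xb/16))
    {A : Set ℝ} (hA : MeasurableSet A) :
    ENNReal.ofReal (ε/(2*xb+1)) * volume (A ∩ Icc (xb - ε*xb/16) (xb + ε*xb/16)) ≤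
      ((volume.restrict (Icc (p-ε) (p+ε))).prod (volume.restrict (Icc (p-ε) (p+ε))))
        {z : ℝ × ℝ | x₁*(1-z.1)+x₂*z.2 ∈ A} := by
  have hx₁pos : 0 < x₁ := by
    have := hx₁.1; nlinarith [mul_pos hε0 hxb]
  have hx₂pos : 0 < x₂ := by
    have := hx₂.1; nlinarith [mul_pos hε0 hxb]
  have hfm : Measurable fun z : ℝ × ℝ => x₁*(1-z.1)+x₂*z.2 := by fun_prop
  have hSm : MeasurableSet {z : ℝ × ℝ | x₁*(1-z.1)+x₂*z.2 ∈ A} := hfm hA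
  rw [Measure.prod_apply hSm]
  have inner : ∀ z₁ : ℝ,
      (volume.restrict (Icc (p-ε) (p+ε)))
        (Prod.mk z₁ ⁻¹' {z : ℝ × ℝ | x₁*(1-z.1)+x₂*z.2 ∈ A})
      = ENNReal.ofReal x₂⁻¹ *
          volume (A ∩ Icc (x₂*(p-ε)+x₁*(1-z₁)) (x₂*(p+ε)+x₁*(1-z₁))) := by
    intro z₁
    have hmeas : MeasurableSet {z₂ : ℝ | x₁*(1-z₁)+x₂*z₂ ∈ A} :=
      (show Measurable fun z₂ : ℝ => x₁*(1-z₁)+x₂*z₂ by fun_prop) hA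
    have hpre : Prod.mk z₁ ⁻¹' {z : ℝ × ℝ | x₁*(1-z.1)+x₂*z.2 ∈ A}
        = {z₂ : ℝ | x₁*(1-z₁)+x₂*z₂ ∈ A} := rfl
    rw [hpre, Measure.restrict_apply hmeas]
    have hset : {z₂ : ℝ | x₁*(1-z₁)+x₂*z₂ ∈ A} ∩ Icc (p-ε) (p+ε)
        = (x₂ * ·) ⁻¹' ((· + x₁*(1-z₁)) ⁻¹'
            (A ∩ Icc (x₂*(p-ε)+x₁*(1-z₁)) (x₂*(p+ε)+x₁*(1-z₁)))) := by
      ext z₂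
      simp only [mem_inter_iff, mem_setOf_eq, mem_Icc, mem_preimage]
      constructor
      · rintro ⟨hA', h1, h2⟩
        refine ⟨by rwa [add_comm], ?_, ?_⟩ <;> nlinarith
      · rintro ⟨hA', h1, h2⟩
        refine ⟨by rwa [add_comm] at hA', ?_, ?_⟩ <;> nlinarith
    rw [hset, Real.volume_preimage_mul_left hx₂pos.ne', measure_preimage_add_right,
      abs_of_pos (inv_pos.2 hx₂pos)]
  simp_rw [inner]
  rw [lintegral_const_mul' _ _ ENNReal.ofReal_ne_top]
  set W : Set (ℝ × ℝ) :=
    {w : ℝ × ℝ | x₂*(p-ε)+x₁*(1-w.1) ≤ w.2 ∧ w.2 ≤ x₂*(p+ε)+x₁*(1-w.1)} with hW_def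
  have hWm : MeasurableSet W := by
    have m1 : Measurable fun w : ℝ × ℝ => x₂*(p-ε)+x₁*(1-w.1) := by fun_prop
    have m2 : Measurable fun w : ℝ × ℝ => w.2 := measurable_snd
    have m3 : Measurable fun w : ℝ × ℝ => x₂*(p+ε)+x₁*(1-w.1) := by fun_prop
    exact (measurableSet_le m1 m2).inter (measurableSet_le m2 m3)
  have hswap : ∫⁻ z₁, volume (A ∩ Icc (x₂*(p-ε)+x₁*(1-z₁)) (x₂*(p+ε)+x₁*(1-z₁)))
        ∂(volume.restrict (Icc (p-ε) (p+ε)))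
      = ∫⁻ y, (volume.restrict (Icc (p-ε) (p+ε)))
          ((fun z₁ => (z₁, y)) ⁻¹' W) ∂(volume.restrict A) := by
    rw [← Measure.prod_apply_symm hWm, Measure.prod_apply hWm]
    refine lintegral_congr fun z₁ => ?_
    have : Prod.mk z₁ ⁻¹' W = Icc (x₂*(p-ε)+x₁*(1-z₁)) (x₂*(p+ε)+x₁*(1-z₁)) := by
      ext y; simp [hW_def, mem_Icc]
    rw [this, Measure.restrict_apply measurableSet_Icc, inter_comm]
  rw [hswap]
  have pointwise : ∀ y : ℝ,
      (Icc (xb - ε*xb/16) (xb + ε*xb/16)).indicator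
        (fun _ => ENNReal.ofReal (ε*x₂/(2*xb+1))) y
      ≤ (volume.restrict (Icc (p-ε) (p+ε))) ((fun z₁ => (z₁, y)) ⁻¹' W) := by
    intro y
    by_cases hy : y ∈ Icc (xb - ε*xb/16) (xb + ε*xb/16)
    · rw [indicator_of_mem hy]
      have hslice : (fun z₁ => (z₁, y)) ⁻¹' W
          = Icc (1 - (y - x₂*(p-ε))/x₁) (1 - (y - x₂*(p+ε))/x₁) := by
        ext z₁
        simp only [hW_def, mem_preimage, mem_setOf_eq, mem_Icc]
        constructor
        · rintro ⟨h1, h2⟩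
          constructor
          · rw [sub_le_comm, le_div_iff₀ hx₁pos]
            linarith
          · rw [le_sub_comm, div_le_iff₀ hx₁pos]
            linarith
        · rintro ⟨h1, h2⟩
          rw [sub_le_comm, le_div_iff₀ hx₁pos] at h1
          rw [le_sub_comm, div_le_iff₀ hx₁pos] at h2
          constructor <;> linarith
      rw [hslice, Measure.restrict_apply measurableSet_Icc, Icc_inter_Icc, Real.volume_Icc]
      exact ENNReal.ofReal_le_ofReal
        (arith_main17 hp0 hp1 hε0 hε1 hxb hx₁.1 hx₁.2 hx₂.1 hx₂.2 hy.1 hy.2)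
    · rw [indicator_of_notMem hy]; exact zero_le
  have hlow : ENNReal.ofReal (ε*x₂/(2*xb+1)) *
        volume (Icc (xb - ε*xb/16) (xb + ε*xb/16) ∩ A)
      ≤ ∫⁻ y, (volume.restrict (Icc (p-ε) (p+ε)))
          ((fun z₁ => (z₁, y)) ⁻¹' W) ∂(volume.restrict A) := by
    calc ENNReal.ofReal (ε*x₂/(2*xb+1)) * volume (Icc (xb - ε*xb/16) (xb + ε*xb/16) ∩ A)
        = ∫⁻ y, (Icc (xb - ε*xb/16) (xb + ε*xb/16)).indicator
            (fun _ => ENNReal.ofReal (ε*x₂/(2*xb+1))) y ∂(volume.restrict A) := by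
          rw [lintegral_indicator_const measurableSet_Icc,
            Measure.restrict_apply measurableSet_Icc]
      _ ≤ _ := lintegral_mono fun y => pointwise y
  calc ENNReal.ofReal (ε/(2*xb+1)) * volume (A ∩ Icc (xb - ε*xb/16) (xb + ε*xb/16))
      = ENNReal.ofReal x₂⁻¹ * (ENNReal.ofReal (ε*x₂/(2*xb+1)) *
          volume (Icc (xb - ε*xb/16) (xb + ε*xb/16) ∩ A)) := by
        rw [inter_comm, ← mul_assoc, ← ENNReal.ofReal_mul (inv_nonneg.2 hx₂pos.le)]
        congr 2
        field_simp
    _ ≤ _ := mul_le_mul_right hlow _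

private lemma prod_mono17 {α β : Type*} [MeasurableSpace α] [MeasurableSpace β]
    {μ₁ μ₂ : Measure α} {ν₁ ν₂ : Measure β} [SFinite ν₁] [SFinite ν₂]
    (hμ : μ₁ ≤ μ₂) (hν : ν₁ ≤ ν₂) : μ₁.prod ν₁ ≤ μ₂.prod ν₂ := by
  rw [Measure.le_iff]
  intro s hs
  rw [Measure.prod_apply hs, Measure.prod_apply hs]
  exact lintegral_mono' hμ fun x => Measure.le_iff'.mp hν _

theorem stmt17 (B : Measure ℝ) [IsProbabilityMeasure B] (hB : B (Set.Icc (0:ℝ) 1)ᶜ = 0)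
    (p ε b : ℝ) (hp : p ∈ Set.Ioo (0:ℝ) 1) (hε : ε ∈ Set.Ioo (0:ℝ) 1) (hb : 0 < b)
    (hsub : Set.Icc (p - ε) (p + ε) ⊆ Set.Ioo (0:ℝ) 1)
    (hlb : ENNReal.ofReal b • volume.restrict (Set.Icc (p - ε) (p + ε)) ≤ B)
    (u : Measure ℝ) [IsProbabilityMeasure u] (hu0 : u (Set.Iio (0:ℝ)) = 0)
    (hu2 : ∫⁻ x, ENNReal.ofReal (1 + x ^ 2) ∂u ≠ ⊤)
    (xb : ℝ) (hxb : 0 < xb) :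
    (ENNReal.ofReal (ε * b ^ 2 / (2 * xb + 1)) *
        (u (Set.Icc (xb - ε * xb / 16) (xb + ε * xb / 16))) ^ 2) •
      volume.restrict (Set.Icc (xb - ε * xb / 16) (xb + ε * xb / 16))
      ≤ transferT B u u := by
  obtain ⟨hp0, hp1⟩ := hp
  obtain ⟨hε0, hε1⟩ := hε
  set I : Set ℝ := Set.Icc (xb - ε * xb / 16) (xb + ε * xb / 16) with hI
  set J : Set ℝ := Set.Icc (p - ε) (p + ε) with hJ
  set f : (ℝ × ℝ) × ℝ × ℝ → ℝ :=
    fun q => q.2.1 * (1 - q.1.1) + q.2.2 * q.1.2 with hf_def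
  have hf : Measurable f := by fun_prop
  set ρ : Measure ℝ := ENNReal.ofReal b • volume.restrict J with hρ
  set u' : Measure ℝ := u.restrict I with hu'
  rw [Measure.le_iff]
  intro A hA
  rw [Measure.smul_apply, Measure.restrict_apply hA, smul_eq_mul]
  rw [transferT, Measure.map_apply hf hA]
  have hmono : ((ρ.prod ρ).prod (u'.prod u')) (f ⁻¹' A)
      ≤ ((B.prod B).prod (u.prod u)) (f ⁻¹' A) :=
    Measure.le_iff'.mp
      (prod_mono17 (prod_mono17 hlb hlb)
        (prod_mono17 Measure.restrict_le_self Measure.restrict_le_self)) _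
  refine le_trans ?_ hmono
  rw [Measure.prod_apply_symm (hf hA)]
  set c := ENNReal.ofReal (ε * b ^ 2 / (2 * xb + 1)) with hc
  have hinner : ∀ x : ℝ × ℝ, x ∈ I ×ˢ I →
      c * volume (A ∩ I) ≤ (ρ.prod ρ) {z : ℝ × ℝ | x.1*(1-z.1)+x.2*z.2 ∈ A} := by
    intro x hx
    have hSm : MeasurableSet {z : ℝ × ℝ | x.1*(1-z.1)+x.2*z.2 ∈ A} :=
      (show Measurable fun z : ℝ × ℝ => x.1*(1-z.1)+x.2*z.2 by fun_prop) hA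
    have expand : (ρ.prod ρ) {z : ℝ × ℝ | x.1*(1-z.1)+x.2*z.2 ∈ A}
        = ENNReal.ofReal b * (ENNReal.ofReal b *
            ((volume.restrict J).prod (volume.restrict J))
              {z : ℝ × ℝ | x.1*(1-z.1)+x.2*z.2 ∈ A}) := by
      rw [hρ, Measure.prod_apply hSm, lintegral_smul_measure]
      simp_rw [Measure.smul_apply, smul_eq_mul]
      rw [lintegral_const_mul' _ _ ENNReal.ofReal_ne_top, ← Measure.prod_apply hSm]
    rw [expand]
    have hkey := key_measure17 hp0.le hp1.le hε0 hε1 hxb hx.1 hx.2 hA (x₁ := x.1) (x₂ := x.2)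
    calc c * volume (A ∩ I)
        = ENNReal.ofReal b * (ENNReal.ofReal b *
            (ENNReal.ofReal (ε/(2*xb+1)) * volume (A ∩ I))) := by
          rw [hc, ← mul_assoc, ← mul_assoc, ← ENNReal.ofReal_mul hb.le,
            ← ENNReal.ofReal_mul (by positivity)]
          congr 2
          ring
      _ ≤ _ := mul_le_mul_right (mul_le_mul_right hkey _) _
  calc c * u I ^ 2 * volume (A ∩ I)
      = ∫⁻ x, (I ×ˢ I).indicator (fun _ => c * volume (A ∩ I)) x ∂(u'.prod u') := by
        rw [lintegral_indicator_const (measurableSet_Icc.prod measurableSet_Icc),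
          Measure.prod_prod, hu', Measure.restrict_apply measurableSet_Icc,
          Set.inter_self]
        ring
    _ ≤ ∫⁻ x, (ρ.prod ρ) ((fun z => (z, x)) ⁻¹' (f ⁻¹' A)) ∂(u'.prod u') := by
        refine lintegral_mono fun x => ?_
        by_cases hx : x ∈ I ×ˢ I
        · rw [Set.indicator_of_mem hx]
          exact hinner x hx
        · rw [Set.indicator_of_notMem hx]; exact zero_le
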